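/- With notation as in the Pauli representation: for x = [[λ, −μ̄],[μ, λ̄]] ∈ SU(2), let P^x_{ij} denote the orthogonal projection of M_2(ℂ) (with Hilbert–Schmidt inner product) onto ℂ·ξ^x_{ij} where ξ^x_{ij} = c_i x c_j. Then the operator norm ‖P^x_{11} P^x_{22}‖ equals | |λ|² − |μ|² |. -/

import Mathlib

open Matrix

attribute [local instance] Matrix.frobeniusNormedAddCommGroup
  Matrix.frobeniusNormedSpace

/-- The four Pauli matrices `c_1, c_2, c_3, c_4`. -/
noncomputable def pauli : Fin 4 → Matrix (Fin 2) (Fin 2) ℂ := fun i =>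
  if i = 0 then 1
  else if i = 1 then !![Complex.I, 0; 0, -Complex.I]
  else if i = 2 then !![0, 1; -1, 0]
  else !![0, Complex.I; Complex.I, 0]

/-- `ξ^x_{ij} = c_i x c_j` for `x = [[λ, -μ̄],[μ, λ̄]]`. -/
noncomputable def xi (l m : ℂ) (i j : Fin 4) : Matrix (Fin 2) (Fin 2) ℂ :=
  pauli i * !![l, -(starRingEnd ℂ) m; m, (starRingEnd ℂ) l] * pauli j

/-- The orthogonal rank-one projection of `M₂(ℂ)` (with the Hilbert–Schmidt
inner product `⟨a|b⟩ = tr(b* a)`, in which each `ξ^x_{ij}` has norm √2) onto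
the line `ℂ · ξ^x_{ij}`:  `a ↦ (1/2) tr((ξ^x_{ij})* a) • ξ^x_{ij}`. -/
noncomputable def Pproj (l m : ℂ) (i j : Fin 4) :
    Matrix (Fin 2) (Fin 2) ℂ →ₗ[ℂ] Matrix (Fin 2) (Fin 2) ℂ :=
  (2 : ℂ)⁻¹ • ((LinearMap.toSpanSingleton ℂ _ (xi l m i j)) ∘ₗ
    (Matrix.traceLinearMap (Fin 2) ℂ ℂ) ∘ₗ (LinearMap.mulLeft ℂ ((xi l m i j)ᴴ)))

lemma xi00 (l m : ℂ) : xi l m 0 0 = !![l, -(starRingEnd ℂ) m; m, (starRingEnd ℂ) l] := by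
  simp [xi, pauli]

lemma xi11 (l m : ℂ) : xi l m 1 1 = !![-l, -(starRingEnd ℂ) m; m, -(starRingEnd ℂ) l] := by
  simp [xi, pauli]
  refine ⟨⟨?_, ?_⟩, ?_, ?_⟩ <;> (ring_nf; rw [Complex.I_sq]; ring)

lemma Pproj_apply (l m : ℂ) (i j : Fin 4) (a : Matrix (Fin 2) (Fin 2) ℂ) :
    Pproj l m i j a = ((2 : ℂ)⁻¹ * ((xi l m i j)ᴴ * a).trace) • xi l m i j := by
  simp [Pproj, LinearMap.toSpanSingleton_apply, LinearMap.mulLeft_apply, smul_smul]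

noncomputable def toE (a : Matrix (Fin 2) (Fin 2) ℂ) :
    PiLp 2 (fun _ : Fin 2 => PiLp 2 (fun _ : Fin 2 => ℂ)) :=
  WithLp.toLp 2 (fun i => WithLp.toLp 2 (a i))

@[simp] lemma toE_apply (a : Matrix (Fin 2) (Fin 2) ℂ) (i j : Fin 2) :
    toE a i j = a i j := rfl

lemma trace_eq_inner (b a : Matrix (Fin 2) (Fin 2) ℂ) :
    (bᴴ * a).trace = inner (𝕜 := ℂ) (toE b) (toE a) := by
  simp only [PiLp.inner_apply, RCLike.inner_apply, toE_apply, Matrix.trace,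
    Matrix.diag, Matrix.mul_apply, Matrix.conjTranspose_apply, Fin.sum_univ_two,
    starRingEnd_apply]
  ring

lemma norm_toE (a : Matrix (Fin 2) (Fin 2) ℂ) : ‖toE a‖ = ‖a‖ := rfl

lemma cs (b a : Matrix (Fin 2) (Fin 2) ℂ) :
    ‖(bᴴ * a).trace‖ ≤ ‖b‖ * ‖a‖ := by
  rw [trace_eq_inner]
  calc ‖inner (𝕜 := ℂ) (toE b) (toE a)‖ ≤ ‖toE b‖ * ‖toE a‖ :=
        norm_inner_le_norm (𝕜 := ℂ) _ _
    _ = ‖b‖ * ‖a‖ := rfl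


lemma norm2 (l m : ℂ) (hx : ‖l‖ ^ 2 + ‖m‖ ^ 2 = 1)
    (e1 e2 e3 e4 : ℂ) (h1 : ‖e1‖ = ‖l‖)
    (h2 : ‖e2‖ = ‖m‖) (h3 : ‖e3‖ = ‖m‖)
    (h4 : ‖e4‖ = ‖l‖) :
    ‖(!![e1, e2; e3, e4] : Matrix (Fin 2) (Fin 2) ℂ)‖ = Real.sqrt 2 := by
  rw [Matrix.frobenius_norm_def, Real.sqrt_eq_rpow]
  congr 1
  simp only [Fin.sum_univ_two, Real.rpow_two]
  simp [h1, h2, h3, h4]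
  nlinarith [hx]

lemma trace_xieta (l m : ℂ) :
    ((xi l m 0 0)ᴴ * (xi l m 1 1)).trace
      = (((2 : ℝ) * (‖m‖ ^ 2 - ‖l‖ ^ 2) : ℝ) : ℂ) := by
  rw [xi00, xi11]
  simp only [Matrix.trace, Matrix.diag, Matrix.mul_apply, Matrix.conjTranspose_apply,
    Fin.sum_univ_two]
  simp only [Complex.star_def, Matrix.of_apply, Matrix.cons_val', Matrix.cons_val_zero, Matrix.cons_val_one,
    Matrix.head_cons, Matrix.empty_val', Matrix.cons_val_fin_one, Matrix.head_fin_const, map_neg,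
    Complex.ofReal_mul, Complex.ofReal_sub, Complex.ofReal_pow]
  have key : ∀ z : ℂ, ((‖z‖ : ℝ) : ℂ) ^ 2 = (starRingEnd ℂ) z * z := fun z => by
    rw [← Complex.ofReal_pow, Complex.sq_norm, Complex.normSq_eq_conj_mul_self]
  rw [key l, key m]
  simp [Complex.conj_conj]
  ring

lemma trace_etaeta (l m : ℂ) (hx : ‖l‖ ^ 2 + ‖m‖ ^ 2 = 1) :
    ((xi l m 1 1)ᴴ * (xi l m 1 1)).trace = 2 := by
  rw [xi11]
  simp only [Matrix.trace, Matrix.diag, Matrix.mul_apply, Matrix.conjTranspose_apply,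
    Fin.sum_univ_two]
  simp only [Complex.star_def, Matrix.of_apply, Matrix.cons_val', Matrix.cons_val_zero, Matrix.cons_val_one,
    Matrix.head_cons, Matrix.empty_val', Matrix.cons_val_fin_one, Matrix.head_fin_const, map_neg]
  have : ((2 : ℂ)) = (((‖l‖ ^ 2 + ‖m‖ ^ 2 : ℝ) : ℂ)) + ((‖l‖ ^ 2 + ‖m‖ ^ 2 : ℝ) : ℂ) := by
    rw [hx]; norm_num
  rw [this]
  have key : ∀ z : ℂ, ((‖z‖ : ℝ) : ℂ) ^ 2 = (starRingEnd ℂ) z * z := fun z => by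
    rw [← Complex.ofReal_pow, Complex.sq_norm, Complex.normSq_eq_conj_mul_self]
  push_cast
  rw [key l, key m]
  simp [Complex.conj_conj]
  ring


/-- For `x = [[λ, -μ̄],[μ, λ̄]] ∈ SU(2)`, the operator norm (with respect to
the Hilbert–Schmidt/Frobenius norm on `M₂(ℂ)`) of the product of the rank-one
projections `P^x_{11}` and `P^x_{22}` equals `||λ|² − |μ|²|`. -/
theorem opNorm_Pproj_one_one_mul_two_two
    (l m : ℂ) (hx : ‖l‖ ^ 2 + ‖m‖ ^ 2 = 1) :
    @Norm.norm _ (ContinuousLinearMap.hasOpNorm (σ₁₂ := RingHom.id ℂ))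
      ((LinearMap.toContinuousLinearMap (Pproj l m 0 0)).comp
        (LinearMap.toContinuousLinearMap (Pproj l m 1 1))) =
      |‖l‖ ^ 2 - ‖m‖ ^ 2| := by
  set T := (LinearMap.toContinuousLinearMap (Pproj l m 0 0)).comp
      (LinearMap.toContinuousLinearMap (Pproj l m 1 1)) with hTdef
  set ξ := xi l m 0 0 with hξdef
  set η := xi l m 1 1 with hηdef
  have hnξ : ‖ξ‖ = Real.sqrt 2 := by
    rw [hξdef, xi00]; exact norm2 l m hx _ _ _ _ rfl (by simp) rfl (by simp)
  have hnη : ‖η‖ = Real.sqrt 2 := by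
    rw [hηdef, xi11]; exact norm2 l m hx _ _ _ _ (by simp) (by simp) rfl (by simp)
  set r : ℝ := (‖m‖ ^ 2 - ‖l‖ ^ 2) / 2 with hrdef
  have hT : ∀ a : Matrix (Fin 2) (Fin 2) ℂ,
      T a = (((r : ℝ) : ℂ) * (ηᴴ * a).trace) • ξ := by
    intro a
    have : T a = Pproj l m 0 0 (Pproj l m 1 1 a) := rfl
    rw [this, Pproj_apply, Pproj_apply, Matrix.mul_smul, Matrix.trace_smul, smul_eq_mul,
      ← smul_smul, smul_smul]
    congr 1
    rw [← hξdef, ← hηdef, trace_xieta]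
    push_cast [hrdef]
    ring
  have habs : ∀ a : Matrix (Fin 2) (Fin 2) ℂ,
      ‖T a‖ = |r| * ‖(ηᴴ * a).trace‖ * Real.sqrt 2 := by
    intro a
    rw [hT a, norm_smul, hnξ, norm_mul, Complex.norm_real,
      Real.norm_eq_abs]
  have hN : |‖l‖ ^ 2 - ‖m‖ ^ 2| = 2 * |r| := by
    rw [hrdef, abs_div, abs_sub_comm]
    simp
    ring
  change @Norm.norm _ (ContinuousLinearMap.hasOpNorm (σ₁₂ := RingHom.id ℂ)) T = _
  apply le_antisymm
  · apply ContinuousLinearMap.opNorm_le_bound _ (abs_nonneg _)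
    intro a
    erw [habs a, hN]
    have h1 : ‖(ηᴴ * a).trace‖ ≤ Real.sqrt 2 * ‖a‖ := by
      calc ‖(ηᴴ * a).trace‖ ≤ ‖η‖ * ‖a‖ := cs η a
        _ = Real.sqrt 2 * ‖a‖ := by rw [hnη]
    have h2 : (0:ℝ) ≤ |r| := abs_nonneg r
    have hs : Real.sqrt 2 * Real.sqrt 2 = 2 := Real.mul_self_sqrt (by norm_num)
    calc |r| * ‖(ηᴴ * a).trace‖ * Real.sqrt 2
        ≤ |r| * (Real.sqrt 2 * ‖a‖) * Real.sqrt 2 := by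
          gcongr
      _ = |r| * ‖a‖ * (Real.sqrt 2 * Real.sqrt 2) := by ring
      _ = 2 * |r| * ‖a‖ := by rw [hs]; ring
  · have hle := T.le_opNorm η
    erw [habs η, hnη, hηdef] at hle
    rw [trace_etaeta l m hx] at hle
    simp only [Complex.norm_two] at hle
    have h2 : (0:ℝ) < Real.sqrt 2 := by positivity
    rw [hN]
    have h3 : 2 * |r| * Real.sqrt 2 ≤ @Norm.norm _ (ContinuousLinearMap.hasOpNorm (σ₁₂ := RingHom.id ℂ)) T * Real.sqrt 2 := by nlinarith [hle]
    exact le_of_mul_le_mul_right h3 h2
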